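/- For every n ≥ 2 with n ≠ 6, the integer 2^n - 1 has a prime divisor that does not divide 2^j - 1 for any 1 ≤ j < n. -/

import Mathlib

open Polynomial in
lemma key_order17 {n p : ℕ} (hn : 0 < n) (hp : p.Prime) [Fact p.Prime]
    (hdvd : (p : ℤ) ∣ (cyclotomic n ℤ).eval 2) :
    orderOf (2 : ZMod p) = ordCompl[p] n := by
  have hroot : IsRoot (cyclotomic n (ZMod p)) 2 := by
    have h0 : (((cyclotomic n ℤ).eval 2 : ℤ) : ZMod p) = 0 :=
      (ZMod.intCast_zmod_eq_zero_iff_dvd _ _).mpr hdvd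
    have h1 : (((cyclotomic n ℤ).eval 2 : ℤ) : ZMod p)
        = (cyclotomic n (ZMod p)).eval 2 := by
      rw [← map_cyclotomic_int n (ZMod p), eval_map]
      have h2 : ((2:ℤ) : ZMod p) = (2 : ZMod p) := by push_cast; ring
      rw [← h2, eval₂_at_intCast]
      simp
    rwa [IsRoot.def, ← h1]
  have hsplit : p ^ (n.factorization p) * ordCompl[p] n = n :=
    Nat.ordProj_mul_ordCompl_eq_self n p
  have hn' : ¬ p ∣ ordCompl[p] n := Nat.not_dvd_ordCompl hp hn.ne'
  haveI : NeZero ((ordCompl[p] n : ℕ) : ZMod p) := NeZero.of_not_dvd _ hn'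
  have hprim : IsPrimitiveRoot (2 : ZMod p) (ordCompl[p] n) := by
    rw [← hsplit] at hroot
    exact (isRoot_cyclotomic_prime_pow_mul_iff_of_charP).mp hroot
  exact hprim.eq_orderOf.symm

lemma two_pow_lb17 {m : ℕ} (h : 3 ≤ m) : 2 * m + 2 ≤ 2 ^ m := by
  induction m, h using Nat.le_induction with
  | base => norm_num
  | succ k hk ih =>
    rw [pow_succ]
    omega

lemma two_pow_lb17' {m : ℕ} (h : 5 ≤ m) : 3 * m + 3 ≤ 2 ^ m := by
  induction m, h using Nat.le_induction with
  | base => norm_num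
  | succ k hk ih =>
    rw [pow_succ]
    omega

set_option maxHeartbeats 1000000 in
theorem stmt_17 (n : ℕ) (hn : 2 ≤ n) (h6 : n ≠ 6) :
    ∃ p : ℕ, p.Prime ∧ p ∣ 2 ^ n - 1 ∧ ∀ j : ℕ, 1 ≤ j → j < n → ¬ p ∣ 2 ^ j - 1 := by
  classical
  set P : ℤ := (Polynomial.cyclotomic n ℤ).eval 2 with hPdef
  have npos : 0 < n := by omega
  have hn1 : 1 < n := hn
  have hPpos : 0 < P := Polynomial.cyclotomic_pos' n (by norm_num : (1:ℤ) < 2)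
  have hPabs : 1 < P.natAbs := by
    have h := Polynomial.sub_one_lt_natAbs_cyclotomic_eval hn1 (by norm_num : (2:ℕ) ≠ 1)
    simpa using h
  have hPdvd : P ∣ 2 ^ n - 1 := by
    have h := Polynomial.eval_dvd (p := Polynomial.cyclotomic n ℤ)
      (q := Polynomial.X ^ n - 1) (x := (2:ℤ)) (Polynomial.cyclotomic.dvd_X_pow_sub_one n ℤ)
    simpa using h
  -- the success path
  have hgood : ∀ q : ℕ, q.Prime → (q:ℤ) ∣ P → ¬ q ∣ n →
      ∃ p : ℕ, p.Prime ∧ p ∣ 2 ^ n - 1 ∧ ∀ j : ℕ, 1 ≤ j → j < n → ¬ p ∣ 2 ^ j - 1 := by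
    intro q hq hqP hqn
    haveI : Fact q.Prime := ⟨hq⟩
    have horder : orderOf (2 : ZMod q) = n := by
      have h := key_order17 npos hq hqP
      rwa [Nat.factorization_eq_zero_of_not_dvd hqn, pow_zero, Nat.div_one] at h
    refine ⟨q, hq, ?_, ?_⟩
    · have h1 : (2 : ZMod q) ^ n = 1 := by rw [← horder]; exact pow_orderOf_eq_one _
      have h0 : ((2 ^ n - 1 : ℕ) : ZMod q) = 0 := by
        push_cast [Nat.one_le_two_pow]
        rw [h1]; ring
      exact (ZMod.natCast_eq_zero_iff _ _).mp h0
    · intro j hj1 hjn hdvdj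
      have h0 : ((2 ^ j - 1 : ℕ) : ZMod q) = 0 :=
        (ZMod.natCast_eq_zero_iff _ _).mpr hdvdj
      have h2 : (2 : ZMod q) ^ j = 1 := by
        push_cast [Nat.one_le_two_pow] at h0
        linear_combination h0
      have hd := orderOf_dvd_of_pow_eq_one h2
      rw [horder] at hd
      exact absurd (Nat.le_of_dvd (by omega) hd) (by omega)
  by_cases hex : ∃ q : ℕ, q.Prime ∧ (q:ℤ) ∣ P ∧ ¬ q ∣ n
  · obtain ⟨q, h1, h2, h3⟩ := hex
    exact hgood q h1 h2 h3
  push_neg at hex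
  exfalso
  -- now every prime divisor of P divides n
  set p : ℕ := P.natAbs.minFac with hpdef
  have hp : p.Prime := Nat.minFac_prime (by omega)
  haveI : Fact p.Prime := ⟨hp⟩
  have hpP : (p:ℤ) ∣ P := Int.dvd_natAbs.mp (Int.natCast_dvd_natCast.mpr (Nat.minFac_dvd _))
  have hodd : p ≠ 2 := by
    intro h2
    have h3 : (p:ℤ) ∣ 2 ^ n - 1 := hpP.trans hPdvd
    rw [h2] at h3
    have h4 : (2:ℤ) ∣ 2 ^ n - 1 := by exact_mod_cast h3
    have h5 : (2:ℤ) ∣ 2 ^ n := dvd_pow_self 2 npos.ne'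
    omega
  have hp3 : 3 ≤ p := by
    have h := hp.two_le
    omega
  have hpn : p ∣ n := hex p hp hpP
  have horder : orderOf (2 : ZMod p) = ordCompl[p] n := key_order17 npos hp hpP
  set n' : ℕ := ordCompl[p] n with hn'def
  have hn'pos : 0 < n' := Nat.ordCompl_pos p npos.ne'
  have hn'ndvd : ¬ p ∣ n' := Nat.not_dvd_ordCompl hp npos.ne'
  have h2ne : (2 : ZMod p) ≠ 0 := by
    intro h
    have h1 : ((2:ℕ) : ZMod p) = 0 := by exact_mod_cast h
    have h2 := (ZMod.natCast_eq_zero_iff _ _).mp h1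
    exact hodd ((Nat.prime_dvd_prime_iff_eq hp Nat.prime_two).mp h2)
  have hn'dvd : n' ∣ p - 1 := by
    rw [← horder]
    exact ZMod.orderOf_dvd_card_sub_one h2ne
  have hn'lt : n' < p := by
    have h := Nat.le_of_dvd (by omega) hn'dvd
    omega
  have hn'2 : 2 ≤ n' := by
    rcases Nat.lt_or_ge n' 2 with h | h
    · exfalso
      have hn'1 : n' = 1 := by omega
      have h1 : orderOf (2 : ZMod p) = 1 := by rw [horder, hn'1]
      have h21 : (2 : ZMod p) = 1 := orderOf_eq_one_iff.mp h1
      have h0 : ((1:ℕ) : ZMod p) = 0 := by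
        push_cast
        have hz : (2 : ZMod p) - 1 = 0 := by rw [h21]; ring
        linear_combination hz
      have hd := (ZMod.natCast_eq_zero_iff _ _).mp h0
      have := Nat.le_of_dvd one_pos hd
      omega
    · exact h
  set v : ℕ := n.factorization p with hvdef
  have hsplit : p ^ v * n' = n := Nat.ordProj_mul_ordCompl_eq_self n p
  have hv1 : 1 ≤ v := Nat.Prime.factorization_pos_of_dvd hp npos.ne' hpn
  -- every prime divisor of P equals p
  have huniq : ∀ q : ℕ, q.Prime → q ∣ P.natAbs → q = p := by
    intro q hq hqd
    by_contra hne
    have hqP : (q:ℤ) ∣ P := Int.dvd_natAbs.mp (Int.natCast_dvd_natCast.mpr hqd)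
    have hqn : q ∣ n := hex q hq hqP
    have hqn' : q ∣ n' := by
      rw [← hsplit] at hqn
      rcases (Nat.Prime.dvd_mul hq).mp hqn with h | h
      · exact absurd ((Nat.prime_dvd_prime_iff_eq hq hp).mp (hq.dvd_of_dvd_pow h)) hne
      · exact h
    have hqlt : q ≤ n' := Nat.le_of_dvd hn'pos hqn'
    have hpq : p ≤ q := Nat.minFac_le_of_dvd hq.two_le hqd
    omega
  obtain ⟨e, hPpow⟩ : ∃ e, P.natAbs = p ^ e :=
    ⟨_, Nat.eq_prime_pow_of_unique_prime_dvd (by omega) (fun {d} hd hdd => huniq d hd hdd)⟩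
  set k : ℕ := n / p with hkdef
  have hk : k * p = n := Nat.div_mul_cancel hpn
  have hkpos : 1 ≤ k := Nat.div_pos (Nat.le_of_dvd npos hpn) hp.pos
  -- p^2 does not divide P
  have hksq : ¬ (p:ℤ)^2 ∣ P := by
    intro hsq
    have hkmem : k ∈ n.properDivisors := by
      rw [Nat.mem_properDivisors]
      exact ⟨Dvd.intro p (by omega), Nat.div_lt_self npos hp.one_lt⟩
    set y : ℤ := 2 ^ k with hydef
    set S : ℤ := ∑ i ∈ Finset.range p, y ^ i with hSdef
    have hgeom : S * (y - 1) = 2 ^ n - 1 := by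
      rw [geom_sum_mul, hydef, ← pow_mul, hk]
    have hyne : y - 1 ≠ 0 := by
      have h2y : (2:ℤ) ≤ y := by
        calc (2:ℤ) = 2 ^ 1 := (pow_one 2).symm
        _ ≤ 2 ^ k := pow_le_pow_right₀ (by norm_num) hkpos
      omega
    have hSP : P ∣ S := by
      have hpoly := Polynomial.X_pow_sub_one_mul_cyclotomic_dvd_X_pow_sub_one_of_dvd ℤ hkmem
      have heval := Polynomial.eval_dvd (x := (2:ℤ)) hpoly
      simp only [Polynomial.eval_mul, Polynomial.eval_sub, Polynomial.eval_pow,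
        Polynomial.eval_X, Polynomial.eval_one] at heval
      rw [← hgeom, mul_comm S (y - 1)] at heval
      exact (mul_dvd_mul_iff_left hyne).mp heval
    have hn'k : n' ∣ k := by
      have h1 : n' * p ∣ k * p := by
        rw [hk, ← hsplit]
        have h2 : p ∣ p ^ v := dvd_pow_self p (by omega)
        calc n' * p ∣ n' * p ^ v := mul_dvd_mul_left n' h2
        _ = p ^ v * n' := mul_comm _ _
      exact (Nat.mul_dvd_mul_iff_right hp.pos).mp h1
    have hpy : (p:ℤ) ∣ y - 1 := by
      have h2k : (2 : ZMod p) ^ k = 1 := by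
        apply orderOf_dvd_iff_pow_eq_one.mp
        rw [horder]
        exact hn'k
      have h0 : ((y - 1 : ℤ) : ZMod p) = 0 := by
        simp only [hydef]
        push_cast
        rw [h2k]
        ring
      exact (ZMod.intCast_zmod_eq_zero_iff_dvd _ _).mp h0
    obtain ⟨t, ht⟩ := hpy
    have hyi : ∀ i : ℕ, (p:ℤ)^2 ∣ y ^ i - (1 + i * (y - 1)) := by
      intro i
      induction i with
      | zero => simp
      | succ m ih =>
        have key : y ^ (m+1) - (1 + ((m+1 : ℕ) : ℤ) * (y - 1))
            = (y ^ m - (1 + m * (y - 1))) * y + m * (y - 1) ^ 2 := by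
          push_cast
          ring
        rw [key]
        apply dvd_add
        · exact Dvd.dvd.mul_right ih y
        · apply Dvd.dvd.mul_left
          rw [ht]
          calc ((p:ℤ))^2 ∣ ((p:ℤ))^2 * t^2 := Dvd.intro _ rfl
          _ = ((p:ℤ) * t)^2 := by ring
    obtain ⟨s, hs⟩ : ∃ s, p - 1 = 2 * s := by
      rcases Nat.even_or_odd p with he | ho
      · exact absurd ((Nat.prime_dvd_prime_iff_eq Nat.prime_two hp).mp he.two_dvd).symm hodd
      · obtain ⟨c, hc⟩ := ho
        exact ⟨c, by omega⟩
    have hsum_id : (∑ i ∈ Finset.range p, (i:ℤ)) = (p : ℤ) * s := by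
      have h2 : (∑ i ∈ Finset.range p, i) * 2 = p * (p - 1) := Finset.sum_range_id_mul_two p
      have h4 : (∑ i ∈ Finset.range p, i) * 2 = (p * s) * 2 := by
        rw [h2, hs]; ring
      have h3 : (∑ i ∈ Finset.range p, i) = p * s :=
        Nat.eq_of_mul_eq_mul_right (by norm_num) h4
      calc (∑ i ∈ Finset.range p, (i:ℤ)) = ((∑ i ∈ Finset.range p, i : ℕ) : ℤ) := by push_cast; ring
      _ = ((p * s : ℕ) : ℤ) := by rw [h3]
      _ = (p:ℤ) * s := by push_cast; ring
    have hSp : (p:ℤ)^2 ∣ S - p := by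
      have hdecomp : S - p = (∑ i ∈ Finset.range p, (y ^ i - (1 + (i:ℤ) * (y - 1))))
          + (y - 1) * (∑ i ∈ Finset.range p, (i:ℤ)) := by
        rw [Finset.sum_sub_distrib, Finset.sum_add_distrib, Finset.sum_const,
          Finset.card_range]
        have hcomm : (∑ i ∈ Finset.range p, (i:ℤ) * (y - 1))
            = (∑ i ∈ Finset.range p, (i:ℤ)) * (y - 1) := by
          rw [← Finset.sum_mul]
        rw [hcomm]
        push_cast
        ring
      rw [hdecomp]
      apply dvd_add
      · exact Finset.dvd_sum fun i _ => hyi i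
      · rw [ht, hsum_id]
        calc ((p:ℤ))^2 ∣ ((p:ℤ))^2 * (t * s) := Dvd.intro _ rfl
        _ = (p:ℤ) * t * ((p:ℤ) * s) := by ring
    have hp2S : (p:ℤ)^2 ∣ S := hsq.trans hSP
    have hp2p : (p:ℤ)^2 ∣ (p:ℤ) := by
      have hd := dvd_sub hp2S hSp
      simpa using hd
    have hle := Int.le_of_dvd (by exact_mod_cast hp.pos) hp2p
    have hc : (3:ℤ) ≤ (p:ℤ) := by exact_mod_cast hp3
    nlinarith
  -- hence P.natAbs = p
  have hPeqp : P.natAbs = p := by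
    have he1 : e ≤ 1 := by
      by_contra hgt
      push_neg at hgt
      have hd2 : p ^ 2 ∣ P.natAbs := by
        calc p ^ 2 ∣ p ^ e := pow_dvd_pow p hgt
        _ ∣ P.natAbs := by rw [← hPpow]
      apply hksq
      have hd3 : (p:ℤ)^2 ∣ (P.natAbs : ℤ) := by exact_mod_cast hd2
      rwa [Int.natAbs_of_nonneg hPpos.le] at hd3
    have he0 : e ≠ 0 := by
      intro h0
      rw [h0, pow_zero] at hPpow
      omega
    have he : e = 1 := by omega
    rw [hPpow, he, pow_one]
  have hPp : P = (p : ℤ) := by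
    rw [← hPeqp, Int.natAbs_of_nonneg hPpos.le]
  -- finally show p < P.natAbs, contradiction
  rcases Nat.lt_or_ge v 2 with hv2 | hv2
  · -- v = 1 : n = n' * p, k = n'
    have hv1' : v = 1 := by omega
    have hkn' : k = n' := by
      have h1 : p ^ 1 * n' = n := by rw [← hv1']; exact hsplit
      rw [pow_one, mul_comm] at h1
      exact Nat.eq_of_mul_eq_mul_right hp.pos (hk.trans h1.symm)
    have hexp := Polynomial.cyclotomic_expand_eq_cyclotomic_mul hp hn'ndvd ℤ
    have heq : (Polynomial.cyclotomic n' ℤ).eval ((2:ℤ)^p)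
        = P * (Polynomial.cyclotomic n' ℤ).eval 2 := by
      have h1 := congrArg (Polynomial.eval (2:ℤ)) hexp
      rw [Polynomial.expand_eval, Polynomial.eval_mul] at h1
      have hn'p : n' * p = n := by rw [← hkn']; exact hk
      rw [hn'p] at h1
      exact h1
    rcases Nat.lt_or_ge n' 3 with hn'3 | hn'3
    · -- n' = 2, so p ≥ 5 (else n = 6)
      have hn'eq : n' = 2 := by omega
      have hQ : (Polynomial.cyclotomic n' ℤ).eval 2 = 3 := by
        rw [hn'eq, Polynomial.cyclotomic_two, Polynomial.eval_add, Polynomial.eval_X,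
          Polynomial.eval_one]
        norm_num
      have hA : (Polynomial.cyclotomic n' ℤ).eval ((2:ℤ)^p) = 2^p + 1 := by
        rw [hn'eq, Polynomial.cyclotomic_two, Polynomial.eval_add, Polynomial.eval_X,
          Polynomial.eval_one]
      have hp5 : 5 ≤ p := by
        rcases Nat.lt_or_ge p 5 with h5 | h5
        · exfalso
          have hp3' : p = 3 := by
            rcases Nat.lt_or_ge p 4 with h4 | h4
            · omega
            · exfalso
              have hp4 : p = 4 := by omega
              rw [hp4] at hp
              norm_num at hp
          apply h6
          rw [← hk, hkn', hn'eq, hp3']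
        · exact h5
      have hbound := two_pow_lb17' hp5
      have h2p : (3 * (p:ℤ) + 3 : ℤ) ≤ 2^p := by exact_mod_cast hbound
      rw [hA, hQ, hPp] at heq
      have hple : (5:ℤ) ≤ (p:ℤ) := by exact_mod_cast hp5
      nlinarith
    · -- n' ≥ 3 : totient ≥ 2, work in ℝ
      have hφ2 : 2 ≤ n'.totient := by
        have heven : Even n'.totient := Nat.totient_even (by omega)
        have hpos' : 0 < n'.totient := Nat.totient_pos.mpr hn'pos
        rcases heven with ⟨c, hc⟩
        omega
      set φ : ℕ := n'.totient with hφdef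
      have hcast : ∀ m : ℕ, ∀ x : ℤ, (((Polynomial.cyclotomic m ℤ).eval x : ℤ) : ℝ)
          = (Polynomial.cyclotomic m ℝ).eval ((x:ℤ) : ℝ) := by
        intro m x
        rw [← Polynomial.map_cyclotomic_int m ℝ, Polynomial.eval_map,
          Polynomial.eval₂_at_intCast]
        simp
      have hA : ((2:ℝ)^p - 1)^φ < (Polynomial.cyclotomic n' ℝ).eval ((2:ℝ)^p) := by
        apply Polynomial.sub_one_pow_totient_lt_cyclotomic_eval (by omega)
        have : (1:ℝ) < 2 := by norm_num
        calc (1:ℝ) < 2 := this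
        _ = 2^1 := (pow_one 2).symm
        _ ≤ 2^p := by
              apply pow_le_pow_right₀ (by norm_num)
              omega
      have hB : (Polynomial.cyclotomic n' ℝ).eval 2 ≤ 3 ^ φ := by
        have h := Polynomial.cyclotomic_eval_le_add_one_pow_totient
          (q := (2:ℝ)) (by norm_num) n'
        norm_num at h
        exact h
      have hBpos : 0 < (Polynomial.cyclotomic n' ℝ).eval 2 :=
        Polynomial.cyclotomic_pos' n' (by norm_num)
      have heqR : (Polynomial.cyclotomic n' ℝ).eval ((2:ℝ)^p)
          = (p:ℝ) * (Polynomial.cyclotomic n' ℝ).eval 2 := by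
        have h1 := congrArg (fun z : ℤ => (z:ℝ)) heq
        rw [hcast n' ((2:ℤ)^p)] at h1
        rw [hPp] at h1
        push_cast at h1
        have h2 := hcast n' 2
        push_cast at h2
        rw [h2] at h1
        exact h1
      -- numeric work
      have h2p : (2 * (p:ℝ) + 2) ≤ 2^p := by exact_mod_cast two_pow_lb17 hp3
      have hpR : (3:ℝ) ≤ (p:ℝ) := by exact_mod_cast hp3
      have hx1 : (1:ℝ) ≤ ((2:ℝ)^p - 1)/3 := by nlinarith
      have hxφ : (((2:ℝ)^p - 1)/3)^2 ≤ (((2:ℝ)^p - 1)/3)^φ :=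
        pow_le_pow_right₀ hx1 hφ2
      have hpx : (p:ℝ) ≤ (((2:ℝ)^p - 1)/3)^2 := by nlinarith
      have hfin : (p:ℝ) * 3^φ ≤ ((2:ℝ)^p - 1)^φ := by
        calc (p:ℝ) * 3^φ ≤ (((2:ℝ)^p - 1)/3)^φ * 3^φ := by
              apply mul_le_mul_of_nonneg_right (hpx.trans hxφ) (by positivity)
        _ = ((((2:ℝ)^p - 1)/3) * 3)^φ := (mul_pow _ _ _).symm
        _ = ((2:ℝ)^p - 1)^φ := by
              congr 1
              field_simp
      have hcontr : (Polynomial.cyclotomic n' ℝ).eval ((2:ℝ)^p)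
          < (Polynomial.cyclotomic n' ℝ).eval ((2:ℝ)^p) := by
        calc (Polynomial.cyclotomic n' ℝ).eval ((2:ℝ)^p)
            = (p:ℝ) * (Polynomial.cyclotomic n' ℝ).eval 2 := heqR
        _ ≤ (p:ℝ) * 3^φ := by
              apply mul_le_mul_of_nonneg_left hB (by positivity)
        _ ≤ ((2:ℝ)^p - 1)^φ := hfin
        _ < (Polynomial.cyclotomic n' ℝ).eval ((2:ℝ)^p) := hA
      exact lt_irrefl _ hcontr
  · -- v ≥ 2 : p ∣ k
    have hpk : p ∣ k := by
      have hvd : p ^ 2 ∣ n := by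
        calc p ^ 2 ∣ p ^ v := pow_dvd_pow p hv2
        _ ∣ n := Nat.ordProj_dvd n p
      have h2 : p * p ∣ n := by rwa [← pow_two]
      exact (Nat.dvd_div_iff_mul_dvd hpn).mpr h2
    have hexp := Polynomial.cyclotomic_expand_eq_cyclotomic hp hpk ℤ
    have heq : P = (Polynomial.cyclotomic k ℤ).eval ((2:ℤ)^p) := by
      have h1 := congrArg (Polynomial.eval (2:ℤ)) hexp
      rw [Polynomial.expand_eval, hk] at h1
      exact h1.symm
    have hk1 : 1 < k := by
      have h := Nat.le_of_dvd (by omega) hpk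
      omega
    have hblt := Polynomial.sub_one_lt_natAbs_cyclotomic_eval (q := 2^p) hk1
      (Nat.one_lt_two_pow_iff.mpr (by omega)).ne'
    have hcast2 : ((2^p : ℕ) : ℤ) = (2:ℤ)^p := by push_cast; ring
    rw [hcast2, ← heq, hPeqp] at hblt
    have hbig := two_pow_lb17 hp3
    omega
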